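/- Let F be a free group with finite symmetric free generating set S, G = (V,E) a finite S-labeled directed multigraph, and X ⊆ V^F the associated graph subshift. If there exists a shift-invariant Borel probability measure μ on X, then there exists a periodic treequence x ∈ X. Moreover, if μ{x ∈ X : x(id) = v} > 0 for some vertex v, then there is a periodic treequence x ∈ X with x(id) = v. -/

import Mathlib

set_option linter.unusedSectionVars false
set_option maxHeartbeats 1000000

open MeasureTheory

section PtimHelpers

open Finset

lemma ptim_sum_rowInd {ι V R : Type} [Fintype ι] [Fintype V] [DecidableEq ι] [DecidableEq V]
    [NonAssocSemiring R] (i : ι) (v : V) (z : ι × V × V → R) :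
    ∑ k : ι × V × V, (if k.1 = i ∧ k.2.1 = v then (1 : R) else 0) * z k = ∑ w, z (i, v, w) := by
  rw [Fintype.sum_prod_type]
  simp only [Fintype.sum_prod_type, ite_and, ite_mul, one_mul, zero_mul,
    Finset.sum_ite_eq, Finset.mem_univ, if_true]
  rw [Finset.sum_comm]
  simp [Finset.sum_ite_eq']
  rw [Finset.sum_comm]
  simp [Finset.sum_ite_eq']

lemma ptim_sum_colInd {ι V R : Type} [Fintype ι] [Fintype V] [DecidableEq ι] [DecidableEq V]
    [NonAssocSemiring R] (i : ι) (v : V) (z : ι × V × V → R) :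
    ∑ k : ι × V × V, (if k.1 = i ∧ k.2.2 = v then (1 : R) else 0) * z k = ∑ w, z (i, w, v) := by
  rw [Fintype.sum_prod_type]
  simp only [Fintype.sum_prod_type, ite_and, ite_mul, one_mul, zero_mul,
    Finset.sum_ite_eq, Finset.mem_univ, if_true]
  rw [Finset.sum_comm]
  simp [Finset.sum_ite_eq']

lemma ptim_sum_singleInd {κ R : Type} [Fintype κ] [DecidableEq κ] [NonAssocSemiring R]
    (k0 : κ) (z : κ → R) :
    ∑ k : κ, (if k = k0 then (1 : R) else 0) * z k = z k0 := by
  simp [ite_mul, Finset.sum_ite_eq']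

lemma ptim_ratApprox {κ : Type} [Fintype κ] [DecidableEq κ] :
    ∀ (n : ℕ) (L : List (κ → ℚ)) (_ : L.length = n) (x : κ → ℝ)
      (_ : ∀ A ∈ L, ∑ k, (A k : ℝ) * x k = 0) (ε : ℝ) (_ : 0 < ε),
      ∃ y : κ → ℚ, (∀ A ∈ L, ∑ k, A k * y k = 0) ∧ ∀ k, |(y k : ℝ) - x k| < ε := by
  intro n
  induction n with
  | zero =>
    rintro L hL x hx ε hε
    rw [List.length_eq_zero_iff] at hL
    subst hL
    have : ∀ k : κ, ∃ q : ℚ, |x k - (q : ℝ)| < ε := fun k => exists_rat_near (x k) hε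
    choose y hy using this
    exact ⟨y, by simp, fun k => by rw [abs_sub_comm]; exact hy k⟩
  | succ n ih =>
    rintro L hL x hx ε hε
    match L, hL with
    | A :: Lt, hL =>
    simp only [List.length_cons, Nat.succ.injEq] at hL
    by_cases hA : A = 0
    · obtain ⟨y, h1, h2⟩ := ih Lt hL x (fun B hB => hx B (List.mem_cons_of_mem _ hB)) ε hε
      refine ⟨y, ?_, h2⟩
      intro B hB
      rcases List.mem_cons.1 hB with rfl | hB
      · simp [hA]
      · exact h1 B hB
    · obtain ⟨j, hj⟩ : ∃ j, A j ≠ 0 := by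
        by_contra h
        push_neg at h
        exact hA (funext h)
      set L'' : List (κ → ℚ) := Lt.map (fun B => B - (B j / A j) • A) with hL''
      have hx'' : ∀ B ∈ L'', ∑ k, (B k : ℝ) * x k = 0 := by
        intro B hB
        rw [hL'', List.mem_map] at hB
        obtain ⟨C, hC, rfl⟩ := hB
        have h1 := hx C (List.mem_cons_of_mem _ hC)
        have h2 := hx A (List.mem_cons_self)
        have : ∑ k, ((C k - (C j / A j) * A k : ℚ) : ℝ) * x k
            = (∑ k, (C k : ℝ) * x k) - ((C j : ℝ) / (A j : ℝ)) * ∑ k, (A k : ℝ) * x k := by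
          rw [Finset.mul_sum, ← Finset.sum_sub_distrib]
          congr 1; funext k; push_cast; ring
        simpa [h1, h2] using this
      set C : ℝ := ∑ k ∈ univ.erase j, |(A k : ℝ)| with hC
      have hCnn : 0 ≤ C := Finset.sum_nonneg fun k _ => abs_nonneg _
      have hAj : (0:ℝ) < |(A j : ℝ)| := by
        simpa using abs_pos.2 (by exact_mod_cast hj : ((A j : ℝ)) ≠ 0)
      set δ : ℝ := min ε (ε * |(A j : ℝ)| / (C + |(A j : ℝ)|)) with hδ
      have hδpos : 0 < δ := lt_min hε (by positivity)
      obtain ⟨y', h1, h2⟩ := ih L'' (by simp [hL'', hL]) x hx'' δ hδpos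
      set t : ℚ := -(∑ k ∈ univ.erase j, A k * y' k) / A j with ht
      set y : κ → ℚ := Function.update y' j t with hy
      have hyk : ∀ k, k ≠ j → y k = y' k := fun k hk => Function.update_of_ne hk _ _
      have hsumA : ∑ k, A k * y k = 0 := by
        rw [← Finset.add_sum_erase _ _ (mem_univ j)]
        have h3 : ∑ k ∈ univ.erase j, A k * y k = ∑ k ∈ univ.erase j, A k * y' k := by
          apply Finset.sum_congr rfl
          intro k hk
          rw [hyk k (Finset.ne_of_mem_erase hk)]
        rw [h3]
        have h4 : y j = t := Function.update_self _ _ _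
        rw [h4, ht]
        field_simp; ring
      refine ⟨y, ?_, ?_⟩
      · intro B hB
        rcases List.mem_cons.1 hB with rfl | hB
        · exact hsumA
        · have hB'' := h1 _ (List.mem_map_of_mem (f := fun B => B - (B j / A j) • A) hB)
          simp only [Pi.sub_apply, Pi.smul_apply, smul_eq_mul] at hB''
          have hzero : B j - B j / A j * A j = 0 := by field_simp; ring
          have e1 : ∑ k, (B k - B j / A j * A k) * y k
              = ∑ k, (B k - B j / A j * A k) * y' k := by
            apply Finset.sum_congr rfl
            intro k _
            by_cases hk : k = j
            · subst hk; rw [hzero, zero_mul, zero_mul]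
            · rw [hyk k hk]
          have e2 : ∑ k, (B k - B j / A j * A k) * y k
              = ∑ k, B k * y k - (B j / A j) * ∑ k, A k * y k := by
            rw [Finset.mul_sum, ← Finset.sum_sub_distrib]
            congr 1; funext k; ring
          rw [e1, hB''] at e2
          rw [hsumA, mul_zero, sub_zero] at e2
          exact e2.symm
      · intro k
        by_cases hk : k = j
        · subst hk
          have hxA := hx A (List.mem_cons_self)
          have hxj : (A k : ℝ) * x k = -(∑ k' ∈ univ.erase k, (A k' : ℝ) * x k') := by
            rw [← Finset.add_sum_erase _ _ (mem_univ k)] at hxA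
            linarith
          have hAk : ((A k : ℝ)) ≠ 0 := by exact_mod_cast hj
          have hyj : (y k : ℝ) = -(∑ k' ∈ univ.erase k, (A k' : ℝ) * (y' k' : ℝ)) / (A k : ℝ) := by
            have h0 : y k = t := Function.update_self _ _ _
            rw [h0, ht]; push_cast; ring_nf
          have hxj' : x k = -(∑ k' ∈ univ.erase k, (A k' : ℝ) * x k') / (A k : ℝ) := by
            rw [eq_div_iff hAk]
            linarith [hxj]
          have key : (y k : ℝ) - x k
              = (∑ k' ∈ univ.erase k, (A k' : ℝ) * (x k' - (y' k' : ℝ))) / (A k : ℝ) := by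
            rw [hyj, hxj', div_sub_div_same]
            congr 1
            have h5 : (∑ k' ∈ univ.erase k, (A k' : ℝ) * (x k' - (y' k' : ℝ)))
                = (∑ k' ∈ univ.erase k, (A k' : ℝ) * x k')
                  - ∑ k' ∈ univ.erase k, (A k' : ℝ) * (y' k' : ℝ) := by
              rw [← Finset.sum_sub_distrib]
              exact Finset.sum_congr rfl fun _ _ => by ring
            rw [h5]; ring
          have hnum : |∑ k' ∈ univ.erase k, (A k' : ℝ) * (x k' - (y' k' : ℝ))| ≤ C * δ := by
            calc |∑ k' ∈ univ.erase k, (A k' : ℝ) * (x k' - (y' k' : ℝ))|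
                ≤ ∑ k' ∈ univ.erase k, |(A k' : ℝ) * (x k' - (y' k' : ℝ))| :=
                  Finset.abs_sum_le_sum_abs _ _
              _ ≤ ∑ k' ∈ univ.erase k, |(A k' : ℝ)| * δ := by
                  apply Finset.sum_le_sum
                  intro k' _
                  rw [abs_mul]
                  exact mul_le_mul_of_nonneg_left
                    (le_of_lt (by rw [abs_sub_comm]; exact h2 k')) (abs_nonneg _)
              _ = C * δ := by rw [← Finset.sum_mul]
          have hbound : |(y k : ℝ) - x k| ≤ C * δ / |(A k : ℝ)| := by
            rw [key, abs_div]
            gcongr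
          have hfin : C * δ / |(A k : ℝ)| < ε := by
            have hδ2 : δ ≤ ε * |(A k : ℝ)| / (C + |(A k : ℝ)|) := min_le_right _ _
            calc C * δ / |(A k : ℝ)|
                ≤ C * (ε * |(A k : ℝ)| / (C + |(A k : ℝ)|)) / |(A k : ℝ)| := by gcongr
              _ = ε * (C / (C + |(A k : ℝ)|)) := by field_simp
              _ < ε * 1 := by
                  refine mul_lt_mul_of_pos_left ?_ hε
                  rw [div_lt_one (by positivity)]
                  linarith
              _ = ε := mul_one ε
          exact lt_of_le_of_lt hbound hfin
        · rw [hyk k hk]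
          exact lt_of_lt_of_le (h2 k) (min_le_left _ _)

lemma ptim_scaleNat {κ : Type} [Fintype κ] (y : κ → ℚ) (hy : ∀ k, 0 ≤ y k) :
    ∃ (D : ℕ) (N : κ → ℕ), 0 < D ∧ ∀ k, (N k : ℚ) = (D : ℚ) * y k := by
  refine ⟨∏ k, (y k).den, fun k => (∏ k', (y k').den) / (y k).den * (y k).num.toNat, ?_, ?_⟩
  · exact Finset.prod_pos fun k _ => (y k).den_pos
  · intro k
    have hdvd : (y k).den ∣ ∏ k', (y k').den := Finset.dvd_prod_of_mem _ (mem_univ k)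
    have hden : ((y k).den : ℚ) ≠ 0 := by exact_mod_cast (y k).den_pos.ne'
    have hnum : ((y k).num.toNat : ℚ) = ((y k).num : ℚ) := by
      exact_mod_cast Int.toNat_of_nonneg (Rat.num_nonneg.2 (hy k))
    have hD : (∏ k', (y k').den) / (y k).den * (y k).den = ∏ k', (y k').den :=
      Nat.div_mul_cancel hdvd
    have hnum2 : ((y k).num : ℚ) = y k * ((y k).den : ℚ) :=
      (div_eq_iff hden).1 (Rat.num_div_den (y k))
    calc (((∏ k', (y k').den) / (y k).den * (y k).num.toNat : ℕ) : ℚ)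
        = (((∏ k', (y k').den) / (y k).den : ℕ) : ℚ) * ((y k).num : ℚ) := by
          rw [Nat.cast_mul, hnum]
      _ = ((((∏ k', (y k').den) / (y k).den) * (y k).den : ℕ) : ℚ) * y k := by
          rw [hnum2, Nat.cast_mul]; ring
      _ = ((∏ k', (y k').den : ℕ) : ℚ) * y k := by rw [hD]

lemma ptim_blowup {V ι : Type} [Fintype V] [Fintype ι]
    (N : ι → V → V → ℕ) (c : V → ℕ)
    (hrow : ∀ i v, ∑ w, N i v w = c v) (hcol : ∀ i v, ∑ w, N i w v = c v) :
    ∃ (T : Type) (_ : Fintype T) (π : T → V) (τ : ι → Equiv.Perm T),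
      (∀ v, 0 < c v → ∃ t, π t = v) ∧ ∀ i t, 0 < N i (π t) (π (τ i t)) := by
  classical
  let T := Σ v : V, Fin (c v)
  let eRow : ∀ i, T ≃ Σ v : V, Σ w : V, Fin (N i v w) := fun i =>
    Equiv.sigmaCongrRight fun v => Fintype.equivOfCardEq (by simp [hrow i v])
  let eCol : ∀ i, T ≃ Σ w : V, Σ v : V, Fin (N i v w) := fun i =>
    Equiv.sigmaCongrRight fun w => Fintype.equivOfCardEq (by simp [hcol i w])
  let sw : ∀ i, (Σ v : V, Σ w : V, Fin (N i v w)) ≃ Σ w : V, Σ v : V, Fin (N i v w) := fun i =>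
    ⟨fun p => ⟨p.2.1, p.1, p.2.2⟩, fun p => ⟨p.2.1, p.1, p.2.2⟩,
      fun ⟨v, w, k⟩ => rfl, fun ⟨w, v, k⟩ => rfl⟩
  have hRowFst : ∀ i (t : T), ((eRow i) t).1 = t.1 := by rintro i ⟨v, k⟩; rfl
  have hColFst : ∀ i (s : Σ w : V, Σ v : V, Fin (N i v w)), ((eCol i).symm s).1 = s.1 := by
    intro i s
    have h1 : ∀ t : T, ((eCol i) t).1 = t.1 := by rintro ⟨v, k⟩; rfl
    have := h1 ((eCol i).symm s)
    rwa [Equiv.apply_symm_apply] at this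
  refine ⟨T, inferInstance, Sigma.fst,
    fun i => ((eRow i).trans (sw i)).trans (eCol i).symm, fun v hv => ⟨⟨v, ⟨0, hv⟩⟩, rfl⟩, ?_⟩
  intro i t
  set a := (eRow i) t with ha
  have h1 : t.1 = a.1 := (hRowFst i t).symm
  have h2 : ((((eRow i).trans (sw i)).trans (eCol i).symm) t).1 = a.2.1 := by
    rw [Equiv.trans_apply, Equiv.trans_apply, ← ha, hColFst]
    rfl
  rw [h1, h2]
  exact (a.2.2).pos

end PtimHelpers

section PtimMeasure

variable {ι V : Type} [Fintype ι] [Fintype V]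
    [MeasurableSpace V] [DiscreteMeasurableSpace V]
    (μ : Measure ((f : FreeGroup ι) → V)) [IsProbabilityMeasure μ]

lemma ptim_meas_eval (g : FreeGroup ι) (v : V) :
    MeasurableSet {x : (f : FreeGroup ι) → V | x g = v} := by
  show MeasurableSet ((fun x : (f : FreeGroup ι) → V => x g) ⁻¹' {v})
  exact (measurable_pi_apply g) (measurableSet_singleton v)

lemma ptim_decompose (g : FreeGroup ι) (S : Set ((f : FreeGroup ι) → V))
    (hS : MeasurableSet S) :
    μ S = ∑ w, μ {x | x ∈ S ∧ x g = w} := by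
  have hdisj : Pairwise (Function.onFun Disjoint fun w => {x | x ∈ S ∧ x g = w}) := by
    intro w w' hww'
    simp only [Function.onFun, Set.disjoint_left]
    rintro x ⟨_, h1⟩ ⟨_, h2⟩
    exact hww' (h1 ▸ h2 ▸ rfl)
  have hmeas : ∀ w, MeasurableSet {x | x ∈ S ∧ x g = w} :=
    fun w => hS.inter (ptim_meas_eval g w)
  have h := measure_iUnion (μ := μ) hdisj hmeas
  rw [tsum_fintype] at h
  have hU : S = ⋃ w, {x | x ∈ S ∧ x g = w} := by
    ext x; simp [Set.mem_iUnion]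
  conv_lhs => rw [hU]
  exact h

omit [IsProbabilityMeasure μ] in
lemma ptim_eval_measure (hinv : ∀ g : FreeGroup ι,
      Measure.map (fun x (f : FreeGroup ι) => x (g⁻¹ * f)) μ = μ)
    (g : FreeGroup ι) (w : V) : μ {x | x g = w} = μ {x | x 1 = w} := by
  conv_rhs => rw [← hinv g⁻¹]
  rw [Measure.map_apply]
  · congr 1
    ext x
    simp
  · exact measurable_pi_lambda _ fun f => measurable_pi_apply _
  · exact ptim_meas_eval 1 w

omit [IsProbabilityMeasure μ] in
lemma ptim_exists_point (S : Set ((f : FreeGroup ι) → V)) (hS : μ S ≠ 0)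
    (B : Set ((f : FreeGroup ι) → V)) (hB : μ B = 0) :
    ∃ x ∈ S, x ∉ B := by
  have h : μ (S \ B) = μ S := measure_diff_null hB
  obtain ⟨x, hx⟩ := nonempty_of_measure_ne_zero (h ▸ hS)
  exact ⟨x, hx.1, hx.2⟩

end PtimMeasure

/-- The group element of the free group corresponding to a label in the symmetric
free generating set, modeled by `ι × Bool`. -/
def genElem {ι : Type} (l : ι × Bool) : FreeGroup ι :=
  if l.2 then FreeGroup.of l.1 else (FreeGroup.of l.1)⁻¹

/-- Membership in the graph subshift determined by the labeled graph `E`. -/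
def InSubshift {ι V : Type} (E : V → V → ι × Bool → Prop) (x : FreeGroup ι → V) : Prop :=
  ∀ (f : FreeGroup ι) (l : ι × Bool), E (x f) (x (f * genElem l)) l

lemma ptim_key {ι V : Type} [Fintype ι] [Fintype V]
    [MeasurableSpace V] [DiscreteMeasurableSpace V]
    (E : V → V → ι × Bool → Prop)
    (μ : Measure ((f : FreeGroup ι) → V)) [IsProbabilityMeasure μ]
    (hXfull : μ {x | ¬ InSubshift E x} = 0)
    (hinv : ∀ g : FreeGroup ι,
      Measure.map (fun x (f : FreeGroup ι) => x (g⁻¹ * f)) μ = μ)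
    (v : V) (hv : μ {x | x 1 = v} ≠ 0) :
    ∃ x : FreeGroup ι → V, InSubshift E x ∧
      (∃ H : Subgroup (FreeGroup ι), H.FiniteIndex ∧
        ∀ f ∈ H, ∀ h : FreeGroup ι, x (f⁻¹ * h) = x h) ∧ x 1 = v := by
  classical
  rcases isEmpty_or_nonempty ι with hι | hι
  · refine ⟨fun _ => v, fun f l => (IsEmpty.false l.1).elim, ⟨⊤, ?_, fun f _ h => rfl⟩, rfl⟩
    exact ⟨by simp [Subgroup.index_top]⟩
  · -- main case: ι nonempty
    obtain ⟨i₀⟩ := hι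
    set xr : ι × V × V → ℝ :=
      fun k => (μ {x | x 1 = k.2.1 ∧ x (genElem (k.1, false)) = k.2.2}).toReal with hxr
    have hmeasPair : ∀ (i : ι) (a b : V),
        MeasurableSet {x : (f : FreeGroup ι) → V | x 1 = a ∧ x (genElem (i, false)) = b} :=
      fun i a b => (ptim_meas_eval 1 a).inter (ptim_meas_eval (genElem (i, false)) b)
    have hrowP : ∀ (i : ι) (a : V), ∑ b, xr (i, a, b) = (μ {x | x 1 = a}).toReal := by
      intro i a
      have h1 := ptim_decompose μ (genElem (i, false)) {x | x 1 = a} (ptim_meas_eval 1 a)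
      simp only [Set.mem_setOf_eq] at h1
      rw [hxr]
      rw [h1, ENNReal.toReal_sum (fun b _ => measure_ne_top μ _)]
    have hcolP : ∀ (i : ι) (b : V), ∑ a, xr (i, a, b) = (μ {x | x 1 = b}).toReal := by
      intro i b
      have h0 : μ {x | x (genElem (i, false)) = b} = μ {x | x 1 = b} :=
        ptim_eval_measure μ hinv (genElem (i, false)) b
      have h1 := ptim_decompose μ 1 {x | x (genElem (i, false)) = b}
        (ptim_meas_eval (genElem (i, false)) b)
      simp only [Set.mem_setOf_eq] at h1
      have h2 : ∀ a, μ {x | x (genElem (i, false)) = b ∧ x 1 = a}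
          = μ {x | x 1 = a ∧ x (genElem (i, false)) = b} := by
        intro a; congr 1; ext x; exact and_comm
      rw [h0] at h1
      simp_rw [h2] at h1
      rw [hxr]
      rw [h1, ENNReal.toReal_sum (fun a _ => measure_ne_top μ _)]
    have hedge : ∀ (i : ι) (a b : V),
        μ {x | x 1 = a ∧ x (genElem (i, false)) = b} ≠ 0 →
        E a b (i, false) ∧ E b a (i, true) := by
      intro i a b hne
      obtain ⟨x0, hx0S, hx0B⟩ := ptim_exists_point μ _ hne _ hXfull
      have hsub : InSubshift E x0 := not_not.1 hx0B
      obtain ⟨ha, hb⟩ := hx0S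
      constructor
      · have h := hsub 1 (i, false)
        rw [one_mul] at h
        exact ha ▸ hb ▸ h
      · have h := hsub (genElem (i, false)) (i, true)
        have hmul : genElem (i, false) * genElem (i, true) = 1 := by
          simp [genElem]
        rw [hmul] at h
        exact hb ▸ ha ▸ h
    -- the linear system
    set Arow : ι → V → (ι × V × V) → ℚ :=
      fun i a k => if k.1 = i ∧ k.2.1 = a then 1 else 0 with hArow
    set Acol : ι → V → (ι × V × V) → ℚ :=
      fun i a k => if k.1 = i ∧ k.2.2 = a then 1 else 0 with hAcol
    set L : List ((ι × V × V) → ℚ) :=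
      ((Finset.univ : Finset (ι × V)).toList.map
        fun p => fun k => Arow p.1 p.2 k - Acol p.1 p.2 k)
      ++ ((Finset.univ : Finset (ι × V)).toList.map
        fun p => fun k => Arow p.1 p.2 k - Arow i₀ p.2 k)
      ++ (((Finset.univ : Finset (ι × V × V)).filter fun k => xr k = 0).toList.map
        fun k0 => fun k => if k = k0 then (1 : ℚ) else 0) with hLdef
    have hcast1 : ∀ (c : Prop) (hc : Decidable c),
        ((@ite ℚ c hc 1 0 : ℚ) : ℝ) = @ite ℝ c hc 1 0 := by
      intro c hc; split_ifs <;> simp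
    have hreal : ∀ A ∈ L, ∑ k, (A k : ℝ) * xr k = 0 := by
      intro A hA
      rw [hLdef] at hA
      rcases List.mem_append.1 hA with hA | hA
      · rcases List.mem_append.1 hA with hA | hA
        · obtain ⟨p, hp, rfl⟩ := List.mem_map.1 hA
          simp only [hArow, hAcol]
          push_cast
          simp_rw [hcast1, sub_mul, Finset.sum_sub_distrib,
            ptim_sum_rowInd, ptim_sum_colInd]
          rw [hrowP, hcolP, sub_self]
        · obtain ⟨p, hp, rfl⟩ := List.mem_map.1 hA
          simp only [hArow]
          push_cast
          simp_rw [hcast1, sub_mul, Finset.sum_sub_distrib, ptim_sum_rowInd]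
          rw [hrowP, hrowP, sub_self]
      · obtain ⟨k0, hk0, rfl⟩ := List.mem_map.1 hA
        simp_rw [hcast1, ptim_sum_singleInd]
        exact (Finset.mem_filter.1 (Finset.mem_toList.1 hk0)).2
    -- choose ε
    have hvtop : μ {x | x 1 = v} ≠ ⊤ := measure_ne_top μ _
    have hvpos : 0 < (μ {x | x 1 = v}).toReal := ENNReal.toReal_pos hv hvtop
    have hexw : ∃ w, 0 < xr (i₀, v, w) := by
      by_contra h
      push_neg at h
      have h1 : ∑ w, xr (i₀, v, w) ≤ 0 := Finset.sum_nonpos fun w _ => h w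
      rw [hrowP] at h1
      linarith
    obtain ⟨w₀, hw₀⟩ := hexw
    set Sp : Finset (ι × V × V) := Finset.univ.filter fun k => 0 < xr k with hSp
    have hSpne : Sp.Nonempty := ⟨(i₀, v, w₀), by simp [hSp, hw₀]⟩
    set ε := Sp.inf' hSpne xr with hε
    have hεpos : 0 < ε := by
      rw [hε, Finset.lt_inf'_iff]
      intro k hk
      exact (Finset.mem_filter.1 hk).2
    obtain ⟨y, hyeq, hyapprox⟩ := ptim_ratApprox L.length L rfl xr hreal ε hεpos
    -- consequences for y
    have hy0 : ∀ k, xr k = 0 → y k = 0 := by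
      intro k hk
      have hmem : (fun k' => if k' = k then (1 : ℚ) else 0) ∈ L := by
        rw [hLdef]
        refine List.mem_append.2 (Or.inr (List.mem_map.2 ⟨k, ?_, rfl⟩))
        rw [Finset.mem_toList, Finset.mem_filter]
        exact ⟨Finset.mem_univ k, hk⟩
      have := hyeq _ hmem
      rwa [ptim_sum_singleInd] at this
    have hypos : ∀ k, 0 < xr k → 0 < y k := by
      intro k hk
      have h1 : ε ≤ xr k := Finset.inf'_le _ (by simp [hSp, hk])
      have h2 := abs_lt.1 (hyapprox k)
      have : (0:ℝ) < (y k : ℝ) := by linarith [h2.1]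
      exact_mod_cast this
    have hynn : ∀ k, 0 ≤ y k := by
      intro k
      rcases eq_or_lt_of_le (ENNReal.toReal_nonneg : (0:ℝ) ≤ xr k) with h | h
      · rw [hy0 k h.symm]
      · exact (hypos k h).le
    obtain ⟨D, Nn, hD, hNn⟩ := ptim_scaleNat y hynn
    -- equation transfer
    have hyrowcol : ∀ (i : ι) (a : V), ∑ b, y (i, a, b) = ∑ b, y (i, b, a) := by
      intro i a
      have hmem : (fun k => Arow i a k - Acol i a k) ∈ L := by
        rw [hLdef]
        exact List.mem_append.2 (Or.inl (List.mem_append.2 (Or.inl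
          (List.mem_map.2 ⟨(i, a), Finset.mem_toList.2 (Finset.mem_univ _), rfl⟩))))
      have h := hyeq _ hmem
      simp only [hArow, hAcol, sub_mul] at h
      rw [Finset.sum_sub_distrib, ptim_sum_rowInd, ptim_sum_colInd, sub_eq_zero] at h
      exact h
    have hyrow0 : ∀ (i : ι) (a : V), ∑ b, y (i, a, b) = ∑ b, y (i₀, a, b) := by
      intro i a
      have hmem : (fun k => Arow i a k - Arow i₀ a k) ∈ L := by
        rw [hLdef]
        exact List.mem_append.2 (Or.inl (List.mem_append.2 (Or.inr
          (List.mem_map.2 ⟨(i, a), Finset.mem_toList.2 (Finset.mem_univ _), rfl⟩))))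
      have h := hyeq _ hmem
      simp only [hArow, sub_mul] at h
      rw [Finset.sum_sub_distrib, ptim_sum_rowInd, ptim_sum_rowInd, sub_eq_zero] at h
      exact h
    -- integer data
    set N : ι → V → V → ℕ := fun i a b => Nn (i, a, b) with hNdef
    set c : V → ℕ := fun a => ∑ b, N i₀ a b with hcdef
    have hrowN : ∀ (i : ι) (a : V), ∑ b, N i a b = c a := by
      intro i a
      have h : ((∑ b, N i a b : ℕ) : ℚ) = ((∑ b, N i₀ a b : ℕ) : ℚ) := by
        push_cast
        simp only [hNdef, hNn]
        rw [← Finset.mul_sum, ← Finset.mul_sum, hyrow0 i a]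
      rw [hcdef]
      exact_mod_cast h
    have hcolN : ∀ (i : ι) (a : V), ∑ b, N i b a = c a := by
      intro i a
      have h : ((∑ b, N i b a : ℕ) : ℚ) = ((∑ b, N i a b : ℕ) : ℚ) := by
        push_cast
        simp only [hNdef, hNn]
        rw [← Finset.mul_sum, ← Finset.mul_sum, hyrowcol i a]
      rw [← hrowN i a]
      exact_mod_cast h
    have hsupp : ∀ (i : ι) (a b : V), 0 < N i a b →
        μ {x | x 1 = a ∧ x (genElem (i, false)) = b} ≠ 0 := by
      intro i a b hpos hzero
      have hxr0 : xr (i, a, b) = 0 := by rw [hxr]; simp [hzero]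
      have hy' : y (i, a, b) = 0 := hy0 _ hxr0
      have : (N i a b : ℚ) = 0 := by rw [hNdef, hNn, hy', mul_zero]
      rw [Nat.cast_eq_zero] at this
      omega
    have hcv : 0 < c v := by
      have h1 : 0 < y (i₀, v, w₀) := hypos _ hw₀
      have h2 : 0 < N i₀ v w₀ := by
        have h3 : (0:ℚ) < (N i₀ v w₀ : ℚ) := by
          rw [hNdef, hNn]
          exact mul_pos (by exact_mod_cast hD) h1
        exact_mod_cast h3
      calc 0 < N i₀ v w₀ := h2
        _ ≤ ∑ b, N i₀ v b := Finset.single_le_sum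
            (f := fun b => N i₀ v b) (fun _ _ => Nat.zero_le _) (Finset.mem_univ w₀)
        _ = c v := by rw [hcdef]
    -- blow-up, permutations, periodic point
    obtain ⟨T, hT, π, τ, hsurj, hposN⟩ := ptim_blowup N c hrowN hcolN
    haveI := hT
    obtain ⟨t₀, ht₀⟩ := hsurj v hcv
    have hedges : ∀ i t, E (π t) (π (τ i t)) (i, false) ∧ E (π (τ i t)) (π t) (i, true) :=
      fun i t => hedge i _ _ (hsupp i _ _ (hposN i t))
    set ρ : FreeGroup ι →* Equiv.Perm T := FreeGroup.lift τ with hρ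
    have hρof : ∀ i : ι, ρ (FreeGroup.of i) = τ i := fun i => FreeGroup.lift_apply_of
    refine ⟨fun h => π ((ρ h⁻¹) t₀), ?_, ⟨ρ.ker, ?_, ?_⟩, ?_⟩
    · rintro f ⟨i, b⟩
      show E (π ((ρ f⁻¹) t₀)) (π ((ρ (f * genElem (i, b))⁻¹) t₀)) (i, b)
      have hfl : (ρ (f * genElem (i, b))⁻¹) t₀ = (ρ (genElem (i, b)))⁻¹ ((ρ f⁻¹) t₀) := by
        rw [mul_inv_rev, map_mul, Equiv.Perm.mul_apply, map_inv]
      rw [hfl]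
      cases b
      · have hg : ρ (genElem (i, false)) = (τ i)⁻¹ := by
          rw [show genElem (i, false) = (FreeGroup.of i)⁻¹ from rfl, map_inv, hρof]
        rw [hg, inv_inv]
        exact (hedges i _).1
      · have hg : ρ (genElem (i, true)) = τ i := by
          rw [show genElem (i, true) = FreeGroup.of i from rfl, hρof]
        rw [hg]
        have h := (hedges i ((τ i)⁻¹ ((ρ f⁻¹) t₀))).2
        rwa [show (τ i) ((τ i)⁻¹ ((ρ f⁻¹) t₀)) = (ρ f⁻¹) t₀ from (Equiv.eq_symm_apply _).mp rfl] at h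
    · exact Subgroup.finiteIndex_ker ρ
    · intro f hf h
      show π ((ρ (f⁻¹ * h)⁻¹) t₀) = π ((ρ h⁻¹) t₀)
      rw [mul_inv_rev, inv_inv, map_mul, Equiv.Perm.mul_apply,
        MonoidHom.mem_ker.1 hf, Equiv.Perm.one_apply]
    · show π ((ρ 1⁻¹) t₀) = v
      rw [inv_one, map_one]
      simpa using ht₀

theorem periodic_treequence_of_invariant_measure
    {ι V : Type} [Fintype ι] [Fintype V]
    [MeasurableSpace V] [DiscreteMeasurableSpace V]
    (E : V → V → ι × Bool → Prop)
    (μ : Measure ((f : FreeGroup ι) → V)) [IsProbabilityMeasure μ]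
    (hXfull : μ {x | ¬ InSubshift E x} = 0)
    (hinv : ∀ g : FreeGroup ι,
      Measure.map (fun x (f : FreeGroup ι) => x (g⁻¹ * f)) μ = μ) :
    (∃ x : FreeGroup ι → V, InSubshift E x ∧
      ∃ H : Subgroup (FreeGroup ι), H.FiniteIndex ∧
        ∀ f ∈ H, ∀ h : FreeGroup ι, x (f⁻¹ * h) = x h) ∧
    (∀ v : V, 0 < μ {x | x 1 = v} →
      ∃ x : FreeGroup ι → V, InSubshift E x ∧
        (∃ H : Subgroup (FreeGroup ι), H.FiniteIndex ∧
          ∀ f ∈ H, ∀ h : FreeGroup ι, x (f⁻¹ * h) = x h) ∧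
        x 1 = v) := by
  constructor
  · have h1 := ptim_decompose μ 1 Set.univ MeasurableSet.univ
    simp only [Set.mem_univ, true_and, measure_univ] at h1
    have h2 : ∃ w : V, μ {x | x 1 = w} ≠ 0 := by
      by_contra h
      push_neg at h
      simp only [h, Finset.sum_const_zero] at h1
      exact one_ne_zero h1
    obtain ⟨w, hw⟩ := h2
    obtain ⟨x, hx1, hx2, _⟩ := ptim_key E μ hXfull hinv w hw
    exact ⟨x, hx1, hx2⟩
  · intro v hv
    exact ptim_key E μ hXfull hinv v hv.ne'
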